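/- The compositional precision and covariance matrices satisfy Σ_c Ω_c = G, where G = I_p − p^{-1} 1_p 1_pᵀ. -/

import Mathlib

open Matrix

noncomputable section

/-- The all-ones vector in `ℝ^p`. -/
def onesV (p : ℕ) : Fin p → ℝ := fun _ => 1

/-- The centering matrix `G = I_p − p⁻¹ 1_p 1_pᵀ`. -/
def Gmat (p : ℕ) : Matrix (Fin p) (Fin p) ℝ :=
  1 - (p : ℝ)⁻¹ • Matrix.vecMulVec (onesV p) (onesV p)

/-- The compositional precision matrix `Ω_c = Ω₀ − Ω₀ 1_p 1_pᵀ Ω₀ / (1_pᵀ Ω₀ 1_p)`. -/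
def OmegaC {p : ℕ} (Ω : Matrix (Fin p) (Fin p) ℝ) : Matrix (Fin p) (Fin p) ℝ :=
  Ω - (onesV p ⬝ᵥ Ω.mulVec (onesV p))⁻¹ •
    Matrix.vecMulVec (Ω.mulVec (onesV p)) (Matrix.vecMul (onesV p) Ω)

/-- The centered log-ratio covariance matrix `Σ_c = G Σ₀ G` with `Σ₀ = Ω₀⁻¹`. -/
def SigmaC {p : ℕ} (Ω : Matrix (Fin p) (Fin p) ℝ) : Matrix (Fin p) (Fin p) ℝ :=
  Gmat p * Ω⁻¹ * Gmat p

/-- The entrywise `ℓ∞`-norm `‖A‖_max = max_{i,j} |a_ij|`. -/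
def maxNorm {p : ℕ} (A : Matrix (Fin p) (Fin p) ℝ) : ℝ := ⨆ i, ⨆ j, |A i j|

/-- The matrix `ℓ1`-norm `‖A‖_{L1} = max_j Σ_i |a_ij|`. -/
def l1Norm {p : ℕ} (A : Matrix (Fin p) (Fin p) ℝ) : ℝ := ⨆ j, ∑ i, |A i j|

lemma mul_vecMulVec' {p : ℕ} (A : Matrix (Fin p) (Fin p) ℝ) (u v : Fin p → ℝ) :
    A * vecMulVec u v = vecMulVec (A.mulVec u) v := by
  ext i j
  simp [Matrix.mul_apply, vecMulVec_apply, Matrix.mulVec, dotProduct,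
    Finset.sum_mul, mul_assoc]

lemma vecMulVec_mul' {p : ℕ} (A : Matrix (Fin p) (Fin p) ℝ) (u v : Fin p → ℝ) :
    vecMulVec u v * A = vecMulVec u (Matrix.vecMul v A) := by
  ext i j
  simp [Matrix.mul_apply, vecMulVec_apply, Matrix.vecMul, dotProduct,
    Finset.mul_sum, mul_assoc]

lemma vecMul_vecMulVec' {p : ℕ} (w u v : Fin p → ℝ) :
    Matrix.vecMul w (vecMulVec u v) = (w ⬝ᵥ u) • v := by
  ext j
  simp [Matrix.vecMul, vecMulVec_apply, dotProduct, Finset.sum_mul, mul_assoc]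

lemma vecMulVec_mulVec' {p : ℕ} (u v x : Fin p → ℝ) :
    (vecMulVec u v).mulVec x = (v ⬝ᵥ x) • u := by
  ext i
  simp [Matrix.mulVec, vecMulVec_apply, dotProduct, Finset.mul_sum, mul_assoc,
    mul_comm, mul_left_comm]

lemma vecMul_matSmul' {p : ℕ} (s : ℝ) (A : Matrix (Fin p) (Fin p) ℝ) (w : Fin p → ℝ) :
    Matrix.vecMul w (s • A) = s • Matrix.vecMul w A := by
  ext j
  simp [Matrix.vecMul, dotProduct, Finset.mul_sum, mul_comm, mul_left_comm]

lemma vecMulVec_zero' {p : ℕ} (u : Fin p → ℝ) : vecMulVec u (0 : Fin p → ℝ) = 0 := by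
  ext i j; simp [vecMulVec_apply]

lemma zero_vecMulVec' {p : ℕ} (v : Fin p → ℝ) : vecMulVec (0 : Fin p → ℝ) v = 0 := by
  ext i j; simp [vecMulVec_apply]

lemma Gmat_mulVec_ones (p : ℕ) (hp : 0 < p) : (Gmat p).mulVec (onesV p) = 0 := by
  have hp' : (p : ℝ) ≠ 0 := Nat.cast_ne_zero.2 hp.ne'
  ext i
  simp [Gmat, Matrix.sub_mulVec, Matrix.smul_mulVec, vecMulVec_mulVec',
    onesV, dotProduct, Pi.smul_apply, smul_eq_mul]
  field_simp
  ring

/-- `Σ_c Ω_c = G`. -/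
theorem sigmaC_mul_omegaC_eq_G (p : ℕ) (hp : 2 ≤ p)
    (Ω₀ : Matrix (Fin p) (Fin p) ℝ) (hΩ₀ : Ω₀.PosDef) :
    SigmaC Ω₀ * OmegaC Ω₀ = Gmat p := by
  have hp0 : 0 < p := by omega
  have hones : onesV p ≠ 0 := by
    intro h
    have := congrFun h ⟨0, hp0⟩
    simp [onesV] at this
  set c : ℝ := onesV p ⬝ᵥ Ω₀.mulVec (onesV p) with hc
  have hcpos : 0 < c := by
    have := hΩ₀.dotProduct_mulVec_pos hones
    simpa [hc] using this
  have hdet : IsUnit Ω₀.det := hΩ₀.det_pos.ne'.isUnit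
  have h1 : Matrix.vecMul (onesV p) (OmegaC Ω₀) = 0 := by
    rw [OmegaC, Matrix.vecMul_sub, vecMul_matSmul', vecMul_vecMulVec', ← hc,
      smul_smul, inv_mul_cancel₀ hcpos.ne', one_smul, sub_self]
  have h2 : Gmat p * OmegaC Ω₀ = OmegaC Ω₀ := by
    rw [Gmat, sub_mul, one_mul, smul_mul_assoc, vecMulVec_mul', h1, vecMulVec_zero',
      smul_zero, sub_zero]
  have h3 : Ω₀⁻¹ * OmegaC Ω₀ =
      1 - c⁻¹ • vecMulVec (onesV p) (Matrix.vecMul (onesV p) Ω₀) := by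
    rw [OmegaC, mul_sub, Matrix.nonsing_inv_mul _ hdet, mul_smul_comm, mul_vecMulVec',
      Matrix.mulVec_mulVec, Matrix.nonsing_inv_mul _ hdet, Matrix.one_mulVec, ← hc]
  have h4 : SigmaC Ω₀ * OmegaC Ω₀ = Gmat p * (Ω₀⁻¹ * OmegaC Ω₀) := by
    rw [SigmaC, mul_assoc, mul_assoc, h2]
  rw [h4, h3, mul_sub, mul_one, mul_smul_comm, mul_vecMulVec',
    Gmat_mulVec_ones p hp0, zero_vecMulVec', smul_zero, sub_zero]

end
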